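/- The singular locus of the Castelnuovo–Richmond quartic CR₄ is the union of the 15 lines L_τ: a point [x] ∈ CR₄ is a singular point of CR₄ if and only if there is a fixed-point-free involution τ of {0,…,5} with x_k = x_{τ(k)} for all k. In particular each line L_τ is contained in CR₄ and every point of L_τ is a singular point of CR₄. -/

import Mathlib

open scoped BigOperators

/-- A fixed-point-free involution of `{0,…,5}`. -/
def FPF (τ : Equiv.Perm (Fin 6)) : Prop :=
  (∀ i, τ (τ i) = i) ∧ ∀ i, τ i ≠ i

/-- The quartic `F(x) = (∑ x_k²)² - 4 ∑ x_k⁴` defining the Castelnuovo–Richmond quartic. -/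
noncomputable def Fq (x : Fin 6 → ℂ) : ℂ := (∑ k, (x k) ^ 2) ^ 2 - 4 * (∑ k, (x k) ^ 4)

/-- The gradient `∇F(x) = (4 x_k ∑ x_j² - 16 x_k³)_k`. -/
noncomputable def gradF (x : Fin 6 → ℂ) : Fin 6 → ℂ :=
  fun k => 4 * x k * (∑ j, (x j) ^ 2) - 16 * (x k) ^ 3

/-- The 2-dimensional subspace whose projectivization is the line
`L_τ = {x : x k = x (τ k) for all k, ∑ x_k = 0}`. -/
noncomputable def lineL (τ : Equiv.Perm (Fin 6)) : Submodule ℂ (Fin 6 → ℂ) where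
  carrier := {x | (∀ k, x k = x (τ k)) ∧ (∑ k, x k) = 0}
  add_mem' := by
    rintro a b ⟨ha1, ha2⟩ ⟨hb1, hb2⟩
    refine ⟨fun k => ?_, ?_⟩
    · simp only [Pi.add_apply, ha1 k, hb1 k]
    · simp only [Pi.add_apply]
      rw [Finset.sum_add_distrib, ha2, hb2, add_zero]
  zero_mem' := ⟨fun k => rfl, by simp⟩
  smul_mem' := by
    rintro c x ⟨h1, h2⟩
    refine ⟨fun k => ?_, ?_⟩
    · simp only [Pi.smul_apply, h1 k]
    · simp only [Pi.smul_apply, smul_eq_mul]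
      rw [← Finset.mul_sum, h2, mul_zero]



def pnr (g : Fin 6 → Fin 3) (k : Fin 6) : Fin 6 :=
  let L := (List.finRange 6).filter (fun j => g j = g k)
  let r := L.idxOf k
  if r % 2 = 0 then L.getD (r+1) k else L.getD (r-1) k

set_option maxHeartbeats 4000000 in
set_option maxRecDepth 10000 in
lemma pnr_good : ∀ g : Fin 6 → Fin 3,
    (∀ t : Fin 3, (Finset.univ.filter (fun k => g k = t)).card % 2 = 0) →
    ∀ k, pnr g (pnr g k) = k ∧ pnr g k ≠ k ∧ g (pnr g k) = g k := by decide


lemma sum_fib (f : Fin 6 → ℂ) (g : Fin 6 → Fin 3) (w : Fin 3 → ℂ)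
    (hfw : ∀ k, f k = w (g k)) :
    ∑ k, f k = ∑ t : Fin 3, ((Finset.univ.filter (fun k => g k = t)).card : ℂ) * w t := by
  rw [← Finset.sum_fiberwise Finset.univ g f]
  refine Finset.sum_congr rfl fun t _ => ?_
  rw [Finset.sum_congr rfl (fun k hk => ?_), Finset.sum_const, nsmul_eq_mul]
  rw [hfw k]
  congr 1
  exact (Finset.mem_filter.mp hk).2

lemma card_fib (g : Fin 6 → Fin 3) :
    ∑ t : Fin 3, (Finset.univ.filter (fun k => g k = t)).card = 6 := by
  rw [← Finset.card_eq_sum_card_fiberwise (fun k _ => Finset.mem_univ (g k))]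
  simp


open Finset in
lemma sum6 {M : Type*} [AddCommMonoid M] {i j k l m n : Fin 6}
    (hnd : ([i,j,k,l,m,n] : List (Fin 6)).Nodup)
    (hcov : ({i,j,k,l,m,n} : Finset (Fin 6)) = Finset.univ) (f : Fin 6 → M) :
    ∑ p, f p = f i + f j + f k + f l + f m + f n := by
  simp only [List.nodup_cons, List.mem_cons, List.mem_singleton, List.nodup_nil, and_true,
    not_or] at hnd
  obtain ⟨⟨h1,h2,h3,h4,h5⟩,⟨h6,h7,h8,h9⟩,⟨h10,h11,h12⟩,⟨h13,h14⟩,h15,-⟩ := hnd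
  rw [← hcov]
  rw [Finset.sum_insert (by simp [h1,h2,h3,h4,h5]),
      Finset.sum_insert (by simp [h6,h7,h8,h9]),
      Finset.sum_insert (by simp [h10,h11,h12]),
      Finset.sum_insert (by simp [h13,h14]),
      Finset.sum_insert (by simp [h15]),
      Finset.sum_singleton]
  abel


open Finset in
lemma fpf_reps (τ : Equiv.Perm (Fin 6)) (h : FPF τ) :
    ∃ i j k l m n : Fin 6, τ i = j ∧ τ k = l ∧ τ m = n ∧
      ([i,j,k,l,m,n] : List (Fin 6)).Nodup ∧
      ({i,j,k,l,m,n} : Finset (Fin 6)) = Finset.univ := by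
  obtain ⟨hinv, hne⟩ := h
  refine ⟨0, τ 0, ?_⟩
  set i : Fin 6 := 0 with hi
  set j : Fin 6 := τ 0 with hj
  have hji : j ≠ i := hne 0
  have hs1 : (Finset.univ \ {i, j} : Finset (Fin 6)).Nonempty := by
    rw [← Finset.card_pos, Finset.card_sdiff_of_subset (Finset.subset_univ _)]
    have : ({i, j} : Finset (Fin 6)).card ≤ 2 := (Finset.card_insert_le _ _).trans (by simp)
    simp only [Finset.card_univ, Fintype.card_fin]
    omega
  set k : Fin 6 := (Finset.univ \ {i, j}).min' hs1 with hk
  have hkmem : k ∈ Finset.univ \ ({i, j} : Finset (Fin 6)) := Finset.min'_mem _ _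
  simp only [Finset.mem_sdiff, Finset.mem_insert, Finset.mem_singleton, not_or] at hkmem
  obtain ⟨-, hki, hkj⟩ := hkmem
  set l : Fin 6 := τ k with hl
  have hlk : l ≠ k := hne k
  have hli : l ≠ i := fun hc => hkj (by rw [← hinv k, ← hl, hc, hi, ← hj])
  have hlj : l ≠ j := fun hc => hki (by
    have := congrArg τ hc
    rw [hl, hinv k, hj, hinv 0, ← hi] at this
    exact this)
  have hs2 : (Finset.univ \ {i, j, k, l} : Finset (Fin 6)).Nonempty := by
    rw [← Finset.card_pos, Finset.card_sdiff_of_subset (Finset.subset_univ _)]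
    have : ({i, j, k, l} : Finset (Fin 6)).card ≤ 4 := by
      refine (Finset.card_insert_le _ _).trans ?_
      have : ({j, k, l} : Finset (Fin 6)).card ≤ 3 := by
        refine (Finset.card_insert_le _ _).trans ?_
        have : ({k, l} : Finset (Fin 6)).card ≤ 2 := (Finset.card_insert_le _ _).trans (by simp)
        omega
      omega
    simp only [Finset.card_univ, Fintype.card_fin]
    omega
  set m : Fin 6 := (Finset.univ \ {i, j, k, l}).min' hs2 with hm
  have hmmem : m ∈ Finset.univ \ ({i, j, k, l} : Finset (Fin 6)) := Finset.min'_mem _ _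
  simp only [Finset.mem_sdiff, Finset.mem_insert, Finset.mem_singleton, not_or] at hmmem
  obtain ⟨-, hmi, hmj, hmk, hml⟩ := hmmem
  set n : Fin 6 := τ m with hn
  have hnm : n ≠ m := hne m
  have hni : n ≠ i := fun hc => hmj (by rw [← hinv m, ← hn, hc, hi, ← hj])
  have hnj : n ≠ j := fun hc => hmi (by
    have := congrArg τ hc
    rw [hn, hinv m, hj, hinv 0, ← hi] at this
    exact this)
  have hnk : n ≠ k := fun hc => hml (by rw [← hinv m, ← hn, hc, ← hl])
  have hnl : n ≠ l := fun hc => hmk (by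
    have := congrArg τ hc
    rw [hn, hinv m, hl, hinv k] at this
    exact this)
  have hik := Ne.symm hki
  have him := Ne.symm hmi
  have hjk := Ne.symm hkj
  have hjm := Ne.symm hmj
  have hkm := Ne.symm hmk
  have hlm := Ne.symm hml
  have hij := Ne.symm hji
  have hil := Ne.symm hli
  have hin := Ne.symm hni
  have hjl := Ne.symm hlj
  have hjn := Ne.symm hnj
  have hkl := Ne.symm hlk
  have hkn := Ne.symm hnk
  have hln := Ne.symm hnl
  have hmn := Ne.symm hnm
  refine ⟨k, l, m, n, rfl, rfl, rfl, ?_, ?_⟩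
  · simp only [List.nodup_cons, List.mem_cons, List.mem_singleton, List.not_mem_nil,
      List.nodup_nil, and_true, not_or, not_false_iff]
    exact ⟨⟨hij, hik, hil, him, hin⟩, ⟨hjk, hjl, hjm, hjn⟩, ⟨hkl, hkm, hkn⟩,
      ⟨hlm, hln⟩, hmn⟩
  · apply Finset.eq_univ_of_card
    rw [Fintype.card_fin]
    rw [Finset.card_insert_of_notMem (by simp [hij, hik, hil, him, hin]),
        Finset.card_insert_of_notMem (by simp [hjk, hjl, hjm, hjn]),
        Finset.card_insert_of_notMem (by simp [hkl, hkm, hkn]),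
        Finset.card_insert_of_notMem (by simp [hlm, hln]),
        Finset.card_insert_of_notMem (by simp [hmn]),
        Finset.card_singleton]
lemma line_sing (τ : Equiv.Perm (Fin 6)) (h : FPF τ) (x : Fin 6 → ℂ)
    (hτx : ∀ k, x k = x (τ k)) (hsum : ∑ k, x k = 0) :
    Fq x = 0 ∧ ∃ c : ℂ, ∀ k, gradF x k = c := by
  obtain ⟨i, j, k, l, m, n, hij, hkl, hmn, hnd, hcov⟩ := fpf_reps τ h
  have hxj : x j = x i := by rw [← hij, ← hτx i]
  have hxl : x l = x k := by rw [← hkl, ← hτx k]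
  have hxn : x n = x m := by rw [← hmn, ← hτx m]
  have e1 : x i + x k + x m = 0 := by
    have h0 : x i + x j + x k + x l + x m + x n = 0 := by
      rw [← sum6 hnd hcov x]; exact hsum
    rw [hxj, hxl, hxn] at h0
    linear_combination h0 / 2
  have hd : x m = -x i - x k := by linear_combination e1
  have e2 : (∑ p, x p ^ 2) = 2 * (x i ^ 2 + x k ^ 2 + x m ^ 2) := by
    rw [sum6 hnd hcov (fun p => x p ^ 2)]
    rw [hxj, hxl, hxn]; ring
  have e4 : (∑ p, x p ^ 4) = 2 * (x i ^ 4 + x k ^ 4 + x m ^ 4) := by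
    rw [sum6 hnd hcov (fun p => x p ^ 4)]
    rw [hxj, hxl, hxn]; ring
  constructor
  · rw [Fq, e2, e4, hd]; ring
  · refine ⟨16 * x i * x k * (x i + x k), fun p => ?_⟩
    have hp : p ∈ ({i,j,k,l,m,n} : Finset (Fin 6)) := hcov ▸ Finset.mem_univ p
    simp only [Finset.mem_insert, Finset.mem_singleton] at hp
    rcases hp with rfl | rfl | rfl | rfl | rfl | rfl
    · simp only [gradF]; rw [e2, hd]; ring
    · simp only [gradF]; rw [hxj, e2, hd]; ring
    · simp only [gradF]; rw [e2, hd]; ring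
    · simp only [gradF]; rw [hxl, e2, hd]; ring
    · simp only [gradF]; rw [e2, hd]; ring
    · simp only [gradF]; rw [hxn, e2, hd]; ring
lemma pairing_of_even (g : Fin 6 → Fin 3)
    (he : ∀ t : Fin 3, (Finset.univ.filter (fun k => g k = t)).card % 2 = 0) :
    ∃ τ : Equiv.Perm (Fin 6), FPF τ ∧ ∀ k, g (τ k) = g k :=
  ⟨⟨pnr g, pnr g, fun k => (pnr_good g he k).1, fun k => (pnr_good g he k).1⟩,
    ⟨fun k => (pnr_good g he k).1, fun k => (pnr_good g he k).2.1⟩,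
    fun k => (pnr_good g he k).2.2⟩

lemma pat_lemma (n0 n1 n2 : ℕ) (h : n0 + n1 + n2 = 6)
    (p0 : 0 < n0) (p1 : 0 < n1) (p2 : 0 < n2) :
    (n0=1∧n1=1∧n2=4) ∨ (n0=1∧n1=2∧n2=3) ∨ (n0=1∧n1=3∧n2=2) ∨
    (n0=1∧n1=4∧n2=1) ∨ (n0=2∧n1=1∧n2=3) ∨ (n0=2∧n1=2∧n2=2) ∨
    (n0=2∧n1=3∧n2=1) ∨ (n0=3∧n1=1∧n2=2) ∨ (n0=3∧n1=2∧n2=1) ∨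
    (n0=4∧n1=1∧n2=1) := by
  have h0 : n0 = 1 ∨ n0 = 2 ∨ n0 = 3 ∨ n0 = 4 := by omega
  have h1 : n1 = 1 ∨ n1 = 2 ∨ n1 = 3 ∨ n1 = 4 := by omega
  have h2 : n2 = 1 ∨ n2 = 2 ∨ n2 = 3 ∨ n2 = 4 := by omega
  rcases h0 with rfl|rfl|rfl|rfl <;> rcases h1 with rfl|rfl|rfl|rfl <;>
    rcases h2 with rfl|rfl|rfl|rfl <;> (revert h; decide)

set_option maxHeartbeats 2000000 in
lemma forward (x : Fin 6 → ℂ) (hx0 : x ≠ 0) (hsum : ∑ k, x k = 0)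
    (c : ℂ) (hgr : ∀ k, gradF x k = c) :
    ∃ τ : Equiv.Perm (Fin 6), FPF τ ∧ ∀ k, x k = x (τ k) := by
  set S : ℂ := ∑ j, (x j) ^ 2 with hSdef
  have hrel : ∀ p q : Fin 6, x p ≠ x q → S = 4 * (x p ^ 2 + x p * x q + x q ^ 2) := by
    intro p q hne
    have h : gradF x p - gradF x q = 0 := by rw [hgr p, hgr q, sub_self]
    simp only [gradF] at h
    rw [← hSdef] at h
    have hfac : (x p - x q) * (4 * S - 16 * (x p ^ 2 + x p * x q + x q ^ 2)) = 0 := by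
      linear_combination h
    rcases mul_eq_zero.mp hfac with h1 | h1
    · exact absurd (sub_eq_zero.mp h1) hne
    · linear_combination h1 / 4
  have hT3 : ∀ p q r : Fin 6, x p ≠ x q → x p ≠ x r → x q ≠ x r →
      x p + x q + x r = 0 := by
    intro p q r hpq hpr hqr
    have h1 := hrel p r hpr
    have h2 := hrel q r hqr
    have hfac : (x p - x q) * (x p + x q + x r) = 0 := by linear_combination (h2 - h1) / 4
    rcases mul_eq_zero.mp hfac with h | h
    · exact absurd (sub_eq_zero.mp h) hpq
    · exact h
  set V := Finset.image x Finset.univ with hVdef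
  have hmemV : ∀ k, x k ∈ V := fun k => Finset.mem_image_of_mem x (Finset.mem_univ k)
  have hVpos : 1 ≤ V.card := Finset.card_pos.mpr ⟨x 0, hmemV 0⟩
  have hVle : V.card ≤ 3 := by
    by_contra hc
    push_neg at hc
    obtain ⟨t, htV, ht4⟩ := Finset.exists_subset_card_eq (s := V) (n := 4) hc
    obtain ⟨a, ha⟩ : t.Nonempty := Finset.card_pos.mp (by omega)
    have h3 : (t.erase a).card = 3 := by rw [Finset.card_erase_of_mem ha, ht4]
    obtain ⟨b, cc, d, hbc, hbd, hcd, hbcd⟩ := Finset.card_eq_three.mp h3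
    have hb : b ∈ t.erase a := by rw [hbcd]; simp
    have hcm : cc ∈ t.erase a := by rw [hbcd]; simp
    have hdm : d ∈ t.erase a := by rw [hbcd]; simp
    have hba : b ≠ a := (Finset.mem_erase.mp hb).1
    have hca : cc ≠ a := (Finset.mem_erase.mp hcm).1
    have hda : d ≠ a := (Finset.mem_erase.mp hdm).1
    obtain ⟨pa, -, hpa⟩ := Finset.mem_image.mp (htV ha)
    obtain ⟨pb, -, hpb⟩ := Finset.mem_image.mp (htV (Finset.mem_of_mem_erase hb))
    obtain ⟨pc, -, hpc⟩ := Finset.mem_image.mp (htV (Finset.mem_of_mem_erase hcm))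
    obtain ⟨pd, -, hpd⟩ := Finset.mem_image.mp (htV (Finset.mem_of_mem_erase hdm))
    have e1 : x pa + x pb + x pc = 0 := hT3 _ _ _
      (by rw [hpa, hpb]; exact fun h => hba h.symm)
      (by rw [hpa, hpc]; exact fun h => hca h.symm)
      (by rw [hpb, hpc]; exact hbc)
    have e2 : x pa + x pb + x pd = 0 := hT3 _ _ _
      (by rw [hpa, hpb]; exact fun h => hba h.symm)
      (by rw [hpa, hpd]; exact fun h => hda h.symm)
      (by rw [hpb, hpd]; exact hbd)
    have : cc = d := by rw [← hpc, ← hpd]; linear_combination e1 - e2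
    exact hcd this
  have hVcases : V.card = 1 ∨ V.card = 2 ∨ V.card = 3 := by omega
  rcases hVcases with hcard | hcard | hcard
  · -- one value
    obtain ⟨a, hVa⟩ := Finset.card_eq_one.mp hcard
    have hall : ∀ k, x k = a := fun k => by
      have := hmemV k; rw [hVa] at this; simpa using this
    obtain ⟨τ, hτ1, -⟩ := pairing_of_even (fun _ => 0) (by decide)
    exact ⟨τ, hτ1, fun k => by rw [hall k, hall (τ k)]⟩
  · -- two values
    obtain ⟨a, b, hab, hVab⟩ := Finset.card_eq_two.mp hcard
    have hor : ∀ k, x k = a ∨ x k = b := fun k => by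
      have := hmemV k; rw [hVab] at this; simpa using this
    set g : Fin 6 → Fin 3 := fun k => if x k = a then 0 else 1 with hgdef
    set n0 := (Finset.univ.filter (fun k => g k = 0)).card with hn0
    set n1 := (Finset.univ.filter (fun k => g k = 1)).card with hn1
    set n2 := (Finset.univ.filter (fun k => g k = 2)).card with hn2
    have hxv : ∀ k, x k = (![a, b, 0] : Fin 3 → ℂ) (g k) := by
      intro k
      by_cases hk : x k = a
      · rw [hgdef]; simp only []; rw [if_pos hk]; simpa using hk
      · have hkb : x k = b := (hor k).resolve_left hk
        rw [hgdef]; simp only []; rw [if_neg hk]; simpa using hkb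
    have hp1 := sum_fib x g ![a, b, 0] hxv
    rw [hsum, Fin.sum_univ_three, ← hn0, ← hn1, ← hn2] at hp1
    simp only [Matrix.cons_val_zero, Matrix.cons_val_one, Matrix.head_cons,
      Matrix.cons_val_two, Matrix.tail_cons, mul_zero, add_zero] at hp1
    have hS2 := sum_fib (fun k => x k ^ 2) g (fun t => (![a, b, 0] t) ^ 2)
      (fun k => by simp only [hxv k])
    rw [← hSdef, Fin.sum_univ_three, ← hn0, ← hn1, ← hn2] at hS2
    simp only [Matrix.cons_val_zero, Matrix.cons_val_one, Matrix.head_cons,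
      Matrix.cons_val_two, Matrix.tail_cons, mul_zero, add_zero,
      ne_eq, OfNat.ofNat_ne_zero, not_false_eq_true, zero_pow] at hS2
    have hsum6 : n0 + n1 + n2 = 6 := by
      have := card_fib g
      rw [Fin.sum_univ_three, ← hn0, ← hn1, ← hn2] at this
      exact this
    have hn2z : n2 = 0 := by
      rw [hn2]
      rw [Finset.card_eq_zero, Finset.filter_eq_empty_iff]
      intro k _
      rw [hgdef]; simp only []
      by_cases hk : x k = a
      · rw [if_pos hk]; decide
      · rw [if_neg hk]; decide
    obtain ⟨pa, -, hpa⟩ := Finset.mem_image.mp (show a ∈ V by rw [hVab]; simp)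
    obtain ⟨pb, -, hpb⟩ := Finset.mem_image.mp (show b ∈ V by rw [hVab]; simp)
    have hrelv : S = 4 * (a ^ 2 + a * b + b ^ 2) := by
      have := hrel pa pb (by rw [hpa, hpb]; exact hab)
      rwa [hpa, hpb] at this
    have hn0pos : 0 < n0 := by
      rw [hn0]
      refine Finset.card_pos.mpr ⟨pa, Finset.mem_filter.mpr ⟨Finset.mem_univ _, ?_⟩⟩
      rw [hgdef]; simp only []; rw [if_pos hpa]
    have hn1pos : 0 < n1 := by
      rw [hn1]
      refine Finset.card_pos.mpr ⟨pb, Finset.mem_filter.mpr ⟨Finset.mem_univ _, ?_⟩⟩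
      rw [hgdef]; simp only []
      rw [if_neg (by rw [hpb]; exact fun h => hab h.symm)]
    have hxzero : a = 0 → b = 0 → False := by
      intro ha0 hb0
      apply hx0
      funext k
      rcases hor k with hk | hk
      · rw [hk, ha0]; rfl
      · rw [hk, hb0]; rfl
    have hEven0 : n0 % 2 = 0 := by
      by_contra hodd
      have hcases : n0 = 1 ∧ n1 = 5 ∨ n0 = 3 ∧ n1 = 3 ∨ n0 = 5 ∧ n1 = 1 := by omega
      rcases hcases with ⟨h0, h1⟩ | ⟨h0, h1⟩ | ⟨h0, h1⟩ <;>
        rw [h0, h1] at hp1 hS2 <;> push_cast at hp1 hS2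
      · have ha : a = -5 * b := by linear_combination -hp1
        rw [ha] at hS2 hrelv
        have hb2 : b ^ 2 = 0 := by linear_combination (hS2 - hrelv) / 54
        have hb0 : b = 0 := by
          have := pow_eq_zero_iff (n := 2) (by norm_num) |>.mp hb2
          exact this
        exact hxzero (by rw [ha, hb0]; ring) hb0
      · have ha : a = -b := by linear_combination -hp1 / 3
        rw [ha] at hS2 hrelv
        have hb2 : b ^ 2 = 0 := by linear_combination (hrelv - hS2) / 2
        have hb0 : b = 0 := pow_eq_zero_iff (n := 2) (by norm_num) |>.mp hb2
        exact hxzero (by rw [ha, hb0]; ring) hb0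
      · have hb : b = -5 * a := by linear_combination -hp1
        rw [hb] at hS2 hrelv
        have ha2 : a ^ 2 = 0 := by linear_combination (hS2 - hrelv) / 54
        have ha0 : a = 0 := pow_eq_zero_iff (n := 2) (by norm_num) |>.mp ha2
        exact hxzero ha0 (by rw [hb, ha0]; ring)
    have hEven1 : n1 % 2 = 0 := by omega
    obtain ⟨τ, hτ1, hτ2⟩ := pairing_of_even g (by
      intro t
      fin_cases t
      · exact hEven0
      · exact hEven1
      · show n2 % 2 = 0; omega)
    exact ⟨τ, hτ1, fun k => by rw [hxv k, hxv (τ k), hτ2 k]⟩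
  · -- three values
    obtain ⟨a, b, d, hab, had, hbd, hVabd⟩ := Finset.card_eq_three.mp hcard
    have hor : ∀ k, x k = a ∨ x k = b ∨ x k = d := fun k => by
      have := hmemV k; rw [hVabd] at this; simpa using this
    set g : Fin 6 → Fin 3 := fun k => if x k = a then 0 else if x k = b then 1 else 2
      with hgdef
    set n0 := (Finset.univ.filter (fun k => g k = 0)).card with hn0
    set n1 := (Finset.univ.filter (fun k => g k = 1)).card with hn1
    set n2 := (Finset.univ.filter (fun k => g k = 2)).card with hn2
    have hxv : ∀ k, x k = (![a, b, d] : Fin 3 → ℂ) (g k) := by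
      intro k
      by_cases hka : x k = a
      · rw [hgdef]; simp only []; rw [if_pos hka]; simpa using hka
      · by_cases hkb : x k = b
        · rw [hgdef]; simp only []; rw [if_neg hka, if_pos hkb]; simpa using hkb
        · have hkd : x k = d := ((hor k).resolve_left hka).resolve_left hkb
          rw [hgdef]; simp only []; rw [if_neg hka, if_neg hkb]; simpa using hkd
    have hp1 := sum_fib x g ![a, b, d] hxv
    rw [hsum, Fin.sum_univ_three, ← hn0, ← hn1, ← hn2] at hp1
    simp only [Matrix.cons_val_zero, Matrix.cons_val_one, Matrix.head_cons,
      Matrix.cons_val_two, Matrix.tail_cons] at hp1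
    have hS2 := sum_fib (fun k => x k ^ 2) g (fun t => (![a, b, d] t) ^ 2)
      (fun k => by simp only [hxv k])
    rw [← hSdef, Fin.sum_univ_three, ← hn0, ← hn1, ← hn2] at hS2
    simp only [Matrix.cons_val_zero, Matrix.cons_val_one, Matrix.head_cons,
      Matrix.cons_val_two, Matrix.tail_cons] at hS2
    have hsum6 : n0 + n1 + n2 = 6 := by
      have := card_fib g
      rw [Fin.sum_univ_three, ← hn0, ← hn1, ← hn2] at this
      exact this
    obtain ⟨pa, -, hpa⟩ := Finset.mem_image.mp (show a ∈ V by rw [hVabd]; simp)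
    obtain ⟨pb, -, hpb⟩ := Finset.mem_image.mp (show b ∈ V by rw [hVabd]; simp)
    obtain ⟨pd, -, hpd⟩ := Finset.mem_image.mp (show d ∈ V by rw [hVabd]; simp)
    have hrab : S = 4 * (a ^ 2 + a * b + b ^ 2) := by
      have := hrel pa pb (by rw [hpa, hpb]; exact hab); rwa [hpa, hpb] at this
    have hrad : S = 4 * (a ^ 2 + a * d + d ^ 2) := by
      have := hrel pa pd (by rw [hpa, hpd]; exact had); rwa [hpa, hpd] at this
    have hrbd : S = 4 * (b ^ 2 + b * d + d ^ 2) := by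
      have := hrel pb pd (by rw [hpb, hpd]; exact hbd); rwa [hpb, hpd] at this
    have hT3v : a + b + d = 0 := by
      have := hT3 pa pb pd (by rw [hpa, hpb]; exact hab)
        (by rw [hpa, hpd]; exact had) (by rw [hpb, hpd]; exact hbd)
      rwa [hpa, hpb, hpd] at this
    have hn0pos : 0 < n0 := by
      rw [hn0]
      refine Finset.card_pos.mpr ⟨pa, Finset.mem_filter.mpr ⟨Finset.mem_univ _, ?_⟩⟩
      rw [hgdef]; simp only []; rw [if_pos hpa]
    have hn1pos : 0 < n1 := by
      rw [hn1]
      refine Finset.card_pos.mpr ⟨pb, Finset.mem_filter.mpr ⟨Finset.mem_univ _, ?_⟩⟩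
      rw [hgdef]; simp only []
      rw [if_neg (by rw [hpb]; exact fun h => hab h.symm), if_pos hpb]
    have hn2pos : 0 < n2 := by
      rw [hn2]
      refine Finset.card_pos.mpr ⟨pd, Finset.mem_filter.mpr ⟨Finset.mem_univ _, ?_⟩⟩
      rw [hgdef]; simp only []
      rw [if_neg (by rw [hpd]; exact fun h => had h.symm),
        if_neg (by rw [hpd]; exact fun h => hbd h.symm)]
    have hxzero : a = 0 → b = 0 → d = 0 → False := by
      intro ha0 hb0 hd0
      apply hx0
      funext k
      rcases hor k with hk | hk | hk
      · rw [hk, ha0]; rfl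
      · rw [hk, hb0]; rfl
      · rw [hk, hd0]; rfl
    clear_value n0 n1 n2
    have key : n0 % 2 = 0 ∧ n1 % 2 = 0 ∧ n2 % 2 = 0 := by
      have hpat := pat_lemma n0 n1 n2 hsum6 hn0pos hn1pos hn2pos
      rcases hpat with ⟨h0,h1,h2⟩|⟨h0,h1,h2⟩|⟨h0,h1,h2⟩|⟨h0,h1,h2⟩|⟨h0,h1,h2⟩|
        ⟨h0,h1,h2⟩|⟨h0,h1,h2⟩|⟨h0,h1,h2⟩|⟨h0,h1,h2⟩|⟨h0,h1,h2⟩ <;>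
        rw [h0, h1, h2] at hp1 hS2 <;> push_cast at hp1 hS2
      · -- (1,1,4)
        have hd0 : d = 0 := by linear_combination (-hp1 - hT3v) / 3
        have hb0 : b = -a := by linear_combination hT3v - hd0
        rw [hb0] at hrab
        rw [hb0, hd0] at hS2
        have ha2 : a ^ 2 = 0 := by linear_combination (hS2 - hrab) / 2
        have ha0 : a = 0 := pow_eq_zero_iff (n := 2) (by norm_num) |>.mp ha2
        exact (hxzero ha0 (by rw [hb0, ha0]; ring) hd0).elim
      · -- (1,2,3)
        exact absurd (show a = d by linear_combination 2 * hT3v + hp1) had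
      · -- (1,3,2)
        exact absurd (show a = b by linear_combination 2 * hT3v + hp1) hab
      · -- (1,4,1)
        have hb0 : b = 0 := by linear_combination (-hp1 - hT3v) / 3
        have hd0 : d = -a := by linear_combination hT3v - hb0
        rw [hd0] at hrad
        rw [hb0, hd0] at hS2
        have ha2 : a ^ 2 = 0 := by linear_combination (hS2 - hrad) / 2
        have ha0 : a = 0 := pow_eq_zero_iff (n := 2) (by norm_num) |>.mp ha2
        exact (hxzero ha0 hb0 (by rw [hd0, ha0]; ring)).elim
      · -- (2,1,3)
        exact absurd (show b = d by linear_combination 2 * hT3v + hp1) hbd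
      · -- (2,2,2)
        exact ⟨by omega, by omega, by omega⟩
      · -- (2,3,1)
        exact absurd (show d = b by linear_combination 2 * hT3v + hp1)
          (fun h => hbd h.symm)
      · -- (3,1,2)
        exact absurd (show b = a by linear_combination 2 * hT3v + hp1)
          (fun h => hab h.symm)
      · -- (3,2,1)
        exact absurd (show d = a by linear_combination 2 * hT3v + hp1)
          (fun h => had h.symm)
      · -- (4,1,1)
        have ha0 : a = 0 := by linear_combination (-hp1 - hT3v) / 3
        have hd0 : d = -b := by linear_combination hT3v - ha0
        rw [hd0] at hrbd
        rw [ha0, hd0] at hS2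
        have hb2 : b ^ 2 = 0 := by linear_combination (hS2 - hrbd) / 2
        have hb0 : b = 0 := pow_eq_zero_iff (n := 2) (by norm_num) |>.mp hb2
        exact (hxzero ha0 hb0 (by rw [hd0, hb0]; ring)).elim
    obtain ⟨τ, hτ1, hτ2⟩ := pairing_of_even g (by
      intro t
      fin_cases t
      · exact hn0 ▸ key.1
      · exact hn1 ▸ key.2.1
      · exact hn2 ▸ key.2.2)
    exact ⟨τ, hτ1, fun k => by rw [hxv k, hxv (τ k), hτ2 k]⟩

/-- the singular locus of the Castelnuovo–Richmond quartic is the union of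
the 15 lines `L_τ`: a point `[x]` of `CR₄` is singular (i.e. `∇F(x)` is a scalar multiple
of `(1,…,1)`) iff `x k = x (τ k)` for some fixed-point-free involution `τ`; in particular
each line `L_τ` is contained in `CR₄` and consists of singular points of `CR₄`. -/
theorem CR_quartic_singular_locus :
    (∀ x : Fin 6 → ℂ, x ≠ 0 → (∑ k, x k) = 0 → Fq x = 0 →
      ((∃ c : ℂ, ∀ k, gradF x k = c) ↔
        ∃ τ : Equiv.Perm (Fin 6), FPF τ ∧ ∀ k, x k = x (τ k))) ∧
    (∀ τ : Equiv.Perm (Fin 6), FPF τ → ∀ x ∈ lineL τ, x ≠ 0 →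
      Fq x = 0 ∧ ∃ c : ℂ, ∀ k, gradF x k = c) := by
  constructor
  · intro x hx0 hsum _hFq
    constructor
    · rintro ⟨c, hc⟩
      exact forward x hx0 hsum c hc
    · rintro ⟨τ, hτ, hx⟩
      exact (line_sing τ hτ x hx hsum).2
  · intro τ hτ x hx hx0
    obtain ⟨h1, h2⟩ := hx
    exact line_sing τ hτ x h1 h2
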